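/- Let G be a K_{x+1}-free graph on m vertices, and suppose G contains a set D of vertices such that the family of x-cliques of G inside D contains no t−1 pairwise vertex-disjoint members. Then the number of x-cliques of G contained in D is O(m^{x−1}), with the implied constant depending only on x, t. -/
import Mathlib


open SimpleGraph

/-- Let G be a K_{x+1}-free graph on m vertices containing a vertex set D
such that the family of x-cliques of G inside D has no t−1 pairwise vertex-disjoint
members. Then the number of x-cliques of G contained in D is O(m^{x−1}), with the implied
constant depending only on x and t. -/
theorem few_cliques_in_D (x t : ℕ) :
    ∃ C : ℝ, ∀ (m : ℕ) (G : SimpleGraph (Fin m)) (D : Finset (Fin m)),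
      G.CliqueFree (x + 1) →
      (¬ ∃ f : Fin (t - 1) → Finset (Fin m),
        (∀ i, G.IsNClique x (f i) ∧ f i ⊆ D) ∧
        ∀ i j : Fin (t - 1), i ≠ j → Disjoint (f i) (f j)) →
      (Set.ncard {S : Finset (Fin m) | G.IsNClique x S ∧ S ⊆ D} : ℝ) ≤
        C * (m : ℝ) ^ (x - 1) := by
  classical
  refine ⟨(t * x + 1 : ℕ), ?_⟩
  intro m G D _hfree hNo
  -- the finset of x-cliques inside D
  set 𝒮 : Finset (Finset (Fin m)) :=
    Finset.univ.filter (fun S => G.IsNClique x S ∧ S ⊆ D) with h𝒮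
  have hset : {S : Finset (Fin m) | G.IsNClique x S ∧ S ⊆ D} = ↑𝒮 := by
    ext S; simp [h𝒮]
  rw [hset, Set.ncard_coe_finset]
  -- trivial case t - 1 = 0
  rcases Nat.eq_zero_or_pos (t - 1) with ht | ht
  · exfalso
    apply hNo
    refine ⟨fun i => (ht ▸ i).elim0, fun i => (ht ▸ i).elim0, fun i => (ht ▸ i).elim0⟩
  -- trivial case x = 0
  rcases Nat.eq_zero_or_pos x with hx | hx
  · subst hx
    have : 𝒮 ⊆ {∅} := by
      intro S hS
      simp only [h𝒮, Finset.mem_filter] at hS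
      simp [Finset.card_eq_zero.mp hS.2.1.2]
    calc (𝒮.card : ℝ) ≤ 1 := by exact_mod_cast (Finset.card_le_card this).trans (by simp)
      _ ≤ (t * 0 + 1 : ℕ) * (m : ℝ) ^ (0 - 1) := by simp
  -- main case: take a maximal disjoint family
  set P : Finset (Finset (Fin m)) → Prop :=
    fun F => (∀ S ∈ F, G.IsNClique x S ∧ S ⊆ D) ∧ (F : Set (Finset (Fin m))).Pairwise Disjoint
    with hP
  have hPempty : P ∅ := ⟨by simp, by simp⟩
  obtain ⟨F, hF, hFmax⟩ :
      ∃ F ∈ Finset.univ.filter P, ∀ F' ∈ Finset.univ.filter P, F'.card ≤ F.card := by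
    obtain ⟨F, hF, hmax⟩ := Finset.exists_max_image (Finset.univ.filter P) Finset.card
      ⟨∅, Finset.mem_filter.mpr ⟨Finset.mem_univ _, hPempty⟩⟩
    exact ⟨F, hF, hmax⟩
  rw [Finset.mem_filter] at hF
  obtain ⟨-, hFP⟩ := hF
  -- F has at most t - 2 members
  have hFcard : F.card < t - 1 := by
    by_contra h
    push_neg at h
    obtain ⟨F', hF'sub, hF'card⟩ := Finset.exists_subset_card_eq h
    apply hNo
    have e : Fin (t - 1) ≃ F' := (Fintype.equivFinOfCardEq (by simp [hF'card])).symm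
    refine ⟨fun i => (e i : Finset (Fin m)), fun i => hFP.1 _ (hF'sub (e i).2), ?_⟩
    intro i j hij
    exact hFP.2 (hF'sub (e i).2) (hF'sub (e j).2)
      (fun h => e.injective.ne hij (Subtype.coe_injective h))
  -- the union B of F
  set B : Finset (Fin m) := F.biUnion id with hB
  have hBcard : B.card ≤ (t - 2) * x := by
    calc B.card ≤ ∑ S ∈ F, S.card := Finset.card_biUnion_le
      _ = ∑ S ∈ F, x := by
          apply Finset.sum_congr rfl
          intro S hS; exact (hFP.1 S hS).1.2
      _ = F.card * x := by rw [Finset.sum_const, smul_eq_mul]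
      _ ≤ (t - 2) * x := by
          apply Nat.mul_le_mul_right
          omega
  -- every x-clique in D meets B
  have hmeet : ∀ S ∈ 𝒮, ∃ v ∈ B, v ∈ S := by
    intro S hS
    simp only [h𝒮, Finset.mem_filter] at hS
    by_contra h
    push_neg at h
    have hdisjB : Disjoint S B := Finset.disjoint_left.mpr (fun a ha hb => h a hb ha)
    have hSnotF : S ∉ F := by
      intro hSF
      obtain ⟨v, hv⟩ := Finset.card_pos.mp (by rw [hS.2.1.2]; exact hx)
      exact h v (Finset.mem_biUnion.mpr ⟨S, hSF, hv⟩) hv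
    have hP' : P (insert S F) := by
      constructor
      · intro T hT
        rcases Finset.mem_insert.mp hT with rfl | hT
        · exact hS.2
        · exact hFP.1 T hT
      · rw [Finset.coe_insert]
        apply Set.Pairwise.insert hFP.2
        intro T hT hne
        have hdT : Disjoint S T :=
          hdisjB.mono_right (fun a ha => Finset.mem_biUnion.mpr ⟨T, hT, ha⟩)
        exact ⟨hdT, hdT.symm⟩
    have := hFmax (insert S F) (Finset.mem_filter.mpr ⟨Finset.mem_univ _, hP'⟩)
    rw [Finset.card_insert_of_notMem hSnotF] at this
    omega
  -- counting
  have hcount : 𝒮.card ≤ B.card * m ^ (x - 1) := by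
    have hsub : 𝒮 ⊆ B.biUnion (fun v => 𝒮.filter (fun S => v ∈ S)) := by
      intro S hS
      obtain ⟨v, hv, hvS⟩ := hmeet S hS
      exact Finset.mem_biUnion.mpr ⟨v, hv, Finset.mem_filter.mpr ⟨hS, hvS⟩⟩
    calc 𝒮.card ≤ (B.biUnion (fun v => 𝒮.filter (fun S => v ∈ S))).card :=
          Finset.card_le_card hsub
      _ ≤ ∑ v ∈ B, (𝒮.filter (fun S => v ∈ S)).card := Finset.card_biUnion_le
      _ ≤ ∑ v ∈ B, m ^ (x - 1) := by
          apply Finset.sum_le_sum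
          intro v _
          have hinj : Set.InjOn (fun S => Finset.erase S v)
              ↑(𝒮.filter (fun S => v ∈ S)) := by
            intro S hS T hT hST
            simp only [Finset.coe_filter, Set.mem_setOf_eq] at hS hT
            rw [← Finset.insert_erase hS.2, ← Finset.insert_erase hT.2]
            exact congrArg (insert v) hST
          have himg : ∀ S ∈ 𝒮.filter (fun S => v ∈ S),
              S.erase v ∈ Finset.univ.powersetCard (x - 1) := by
            intro S hS
            rw [Finset.mem_filter, h𝒮, Finset.mem_filter] at hS
            rw [Finset.mem_powersetCard]
            exact ⟨Finset.subset_univ _, by rw [Finset.card_erase_of_mem hS.2,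
              hS.1.2.1.2]⟩
          calc (𝒮.filter (fun S => v ∈ S)).card
              ≤ (Finset.univ.powersetCard (x - 1)).card :=
                Finset.card_le_card_of_injOn _ himg hinj
            _ = m.choose (x - 1) := by
                rw [Finset.card_powersetCard, Finset.card_univ, Fintype.card_fin]
            _ ≤ m ^ (x - 1) := Nat.choose_le_pow m (x - 1)
      _ = B.card * m ^ (x - 1) := by rw [Finset.sum_const, smul_eq_mul]
  have hfinal : 𝒮.card ≤ (t * x + 1) * m ^ (x - 1) := by
    calc 𝒮.card ≤ B.card * m ^ (x - 1) := hcount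
      _ ≤ ((t - 2) * x) * m ^ (x - 1) := Nat.mul_le_mul_right _ hBcard
      _ ≤ (t * x + 1) * m ^ (x - 1) := by
          apply Nat.mul_le_mul_right
          have : t - 2 ≤ t := Nat.sub_le _ _
          nlinarith [Nat.sub_le t 2]
  calc (𝒮.card : ℝ) ≤ ((t * x + 1) * m ^ (x - 1) : ℕ) := by exact_mod_cast hfinal
    _ = (t * x + 1 : ℕ) * (m : ℝ) ^ (x - 1) := by push_cast; ring
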